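/- (Rørdam–Tarski Theorem) Let S be a preordered abelian monoid and let x, y ∈ S. Then x <_s y if and only if x ∈ ⟨y⟩ and ν(x) < ν(y) for every state ν on S with ν(y) = 1. -/

import Mathlib

open scoped ENNReal

section RT
variable {S : Type*} [AddCommMonoid S] [Preorder S]

private lemma RT.le_add_left (hzero : ∀ x : S, 0 ≤ x)
    (hadd : ∀ x y z : S, x ≤ y → x + z ≤ y + z) (a c : S) : a ≤ c + a := by
  have := hadd 0 c a (hzero c); rwa [zero_add] at this

private lemma RT.add_le_add (hadd : ∀ x y z : S, x ≤ y → x + z ≤ y + z)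
    {a b c d : S} (h1 : a ≤ b) (h2 : c ≤ d) : a + c ≤ b + d := by
  calc a + c ≤ b + c := hadd _ _ _ h1
    _ = c + b := add_comm _ _
    _ ≤ d + b := hadd _ _ _ h2
    _ = b + d := add_comm _ _

private lemma RT.nsmul_mono (hadd : ∀ x y z : S, x ≤ y → x + z ≤ y + z)
    {a b : S} (n : ℕ) (h : a ≤ b) : n • a ≤ n • b := by
  induction n with
  | zero => simp
  | succ k ih => rw [succ_nsmul, succ_nsmul]; exact RT.add_le_add hadd ih h

private lemma RT.nsmul_le_nsmul (hzero : ∀ x : S, 0 ≤ x)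
    (hadd : ∀ x y z : S, x ≤ y → x + z ≤ y + z)
    {k l : ℕ} (h : k ≤ l) (a : S) : k • a ≤ l • a := by
  have : l = k + (l - k) := by omega
  rw [this, add_nsmul]
  exact RT.le_add_left hzero hadd _ _ |>.trans (le_of_eq (add_comm _ _))

variable (hzero : ∀ x : S, 0 ≤ x) (hadd : ∀ x y z : S, x ≤ y → x + z ≤ y + z)
  {x y : S} {m : ℕ} (hm : x ≤ m • y) (hm1 : 1 ≤ m)
  (hns : ¬ ∃ n : ℕ, 1 ≤ n ∧ (n + 1) • x ≤ n • y)

include hzero hadd hns in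
/-- If `K • x ≤ L • y` with `L < K` then we get stable domination, contradiction. -/
private lemma RT.keyA {K L : ℕ} (h : K • x ≤ L • y) (hKL : L < K) : False := by
  rcases Nat.eq_zero_or_pos L with hL | hL
  · -- K • x ≤ 0, so (2K) • x ≤ 0 ≤ 1 • y with 2K ≥ 2
    subst hL
    have h0 : K • x ≤ 0 := by simpa using h
    have h2 : (2 * K) • x ≤ (1 : ℕ) • y := by
      have : (2 * K) • x = K • x + K • x := by rw [two_mul, add_nsmul]
      rw [this, one_smul]
      calc K • x + K • x ≤ 0 + 0 := RT.add_le_add hadd h0 h0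
        _ = 0 := by simp
        _ ≤ y := hzero y
    exact hns ⟨2 * K - 1, by omega, by
      have : 2 * K - 1 + 1 = 2 * K := by omega
      rw [this]; exact h2.trans (RT.nsmul_le_nsmul hzero hadd (by omega) y)⟩
  · refine hns ⟨K - 1, by omega, ?_⟩
    have : K - 1 + 1 = K := by omega
    rw [this]
    exact h.trans (RT.nsmul_le_nsmul hzero hadd (by omega) y)

include hadd in
/-- Chain contraction: from `(b+d) • y ≤ b • y`, any `(b + j + k*d) • y ≤ (b + j) • y`. -/
private lemma RT.chain {b d : ℕ} (h : (b + d) • y ≤ b • y) (j k : ℕ) :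
    (b + j + k * d) • y ≤ (b + j) • y := by
  induction k with
  | zero => simp
  | succ k ih =>
    have step : (b + j + (k + 1) * d) • y = (b + j + k * d) • y + d • y := by
      rw [← add_nsmul]; ring_nf
    rw [step]
    calc (b + j + k * d) • y + d • y ≤ (b + j) • y + d • y := hadd _ _ _ ih
      _ = (b + d) • y + j • y := by rw [← add_nsmul, ← add_nsmul]; ring_nf
      _ ≤ b • y + j • y := hadd _ _ _ h
      _ = (b + j) • y := by rw [← add_nsmul]

include hzero hadd hm hm1 hns in
/-- No contraction among multiples of `y`. -/
private lemma RT.fact1 {a b : ℕ} (h : a • y ≤ b • y) (hba : b < a) : False := by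
  set d := a - b with hd
  have hd1 : 1 ≤ d := by omega
  have hbd : (b + d) • y ≤ b • y := by rw [show b + d = a by omega]; exact h
  set n := b + d with hn
  have hnm : b ≤ n * m := by
    calc b ≤ n := by omega
      _ = n * 1 := by ring
      _ ≤ n * m := Nat.mul_le_mul_left n hm1
  set j := (n * m - b) % d with hj
  set k := (n * m - b) / d with hk
  have hrep : n * m = b + j + k * d := by
    have h1 := Nat.div_add_mod (n * m - b) d
    rw [← hk, ← hj] at h1
    have h2 : k * d = d * k := Nat.mul_comm _ _
    omega
  have hchain : (n * m) • y ≤ (b + j) • y := by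
    rw [hrep]; exact RT.chain hadd hbd j k
  have hx : n • x ≤ (b + j) • y := by
    calc n • x ≤ n • (m • y) := RT.nsmul_mono hadd n hm
      _ = (n * m) • y := by rw [mul_smul]
      _ ≤ (b + j) • y := hchain
  have hjd : j < d := Nat.mod_lt _ (by omega)
  exact RT.keyA hzero hadd hns hx (by omega)

include hzero hadd hns in
/-- Trade cost is at least 1: `b • y + n • x ≤ b' • y` with `n ≥ 1` forces `b + n ≤ b'`. -/
private lemma RT.fact2 {b n b' : ℕ} (h : b • y + n • x ≤ b' • y) (hn : 1 ≤ n)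
    (hlt : b' < b + n) : False := by
  -- replace b' by max b b'
  set c := max b b' with hc
  have h' : b • y + n • x ≤ c • y :=
    h.trans (RT.nsmul_le_nsmul hzero hadd (le_max_right _ _) y)
  have hbc : b ≤ c := le_max_left _ _
  have hclt : c < b + n := by omega
  set e := c - b with he
  have hen : e < n := by omega
  -- claim: ∀ k, ((k+1)*n) • x + b • y ≤ (b + (k+1)*e) • y
  have claim : ∀ k : ℕ, ((k + 1) * n) • x + b • y ≤ (b + (k + 1) * e) • y := by
    intro k
    induction k with
    | zero =>
      rw [show (0 + 1) * n = n by ring, show b + (0 + 1) * e = c by omega]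
      calc n • x + b • y = b • y + n • x := add_comm _ _
        _ ≤ c • y := h'

    | succ k ih =>
      have step : ((k + 2) * n) • x + b • y = n • x + (((k + 1) * n) • x + b • y) := by
        rw [← add_assoc, ← add_nsmul]; ring_nf
      rw [show k + 1 + 1 = k + 2 by ring]
      calc ((k + 2) * n) • x + b • y
          = n • x + (((k + 1) * n) • x + b • y) := step
        _ ≤ n • x + (b + (k + 1) * e) • y :=
            RT.add_le_add hadd le_rfl ih
        _ = (n • x + b • y) + ((k + 1) * e) • y := by rw [add_nsmul, ← add_assoc]
        _ = (b • y + n • x) + ((k + 1) * e) • y := by rw [add_comm (n • x) (b • y)]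
        _ ≤ c • y + ((k + 1) * e) • y := hadd _ _ _ h'
        _ = (b + (k + 2) * e) • y := by
            rw [← add_nsmul, show c = b + e by omega]; ring_nf
  set k := b + 2 with hk
  have hfin : (k * n) • x ≤ (b + k * e) • y := by
    have h1 : (k * n) • x ≤ (k * n) • x + b • y :=
      (RT.le_add_left hzero hadd _ _).trans (le_of_eq (add_comm _ _))
    have h2 := claim (k - 1)
    rw [show k - 1 + 1 = k by omega] at h2
    exact h1.trans h2
  refine RT.keyA hzero hadd hns hfin ?_
  have h1 : k * (e + 1) ≤ k * n := Nat.mul_le_mul_left k (by omega)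
  have h2 : k * (e + 1) = k * e + k := by ring
  omega


/-- A "partial state" encoded as a graph: contains (0,0), closed under addition,
functional, and monotone w.r.t. the order on `S`. -/
def RT.Good (G : Set (S × ℝ≥0∞)) : Prop :=
  ((0 : S), (0 : ℝ≥0∞)) ∈ G ∧
  (∀ p ∈ G, ∀ q ∈ G, (p.1 + q.1, p.2 + q.2) ∈ G) ∧
  (∀ p ∈ G, ∀ q ∈ G, p.1 = q.1 → p.2 = q.2) ∧
  (∀ p ∈ G, ∀ q ∈ G, p.1 ≤ q.1 → p.2 ≤ q.2)

lemma RT.good_smul {G : Set (S × ℝ≥0∞)} (hG : RT.Good G) {s : S} {r : ℝ≥0∞}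
    (h : (s, r) ∈ G) (n : ℕ) : ((n • s : S), (n : ℝ≥0∞) * r) ∈ G := by
  induction n with
  | zero => simpa using hG.1
  | succ k ih =>
    have := hG.2.1 _ ih _ h
    simp only [Prod.fst, Prod.snd] at this
    have e1 : (k + 1) • s = k • s + s := succ_nsmul s k
    have e2 : ((k + 1 : ℕ) : ℝ≥0∞) * r = (k : ℝ≥0∞) * r + r := by
      push_cast; ring
    rw [e1, e2]; exact this

lemma RT.onestep (hzero : ∀ x : S, 0 ≤ x)
    (hadd : ∀ x y z : S, x ≤ y → x + z ≤ y + z)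
    {G : Set (S × ℝ≥0∞)} (hG : RT.Good G) (z : S) :
    ∃ α : ℝ≥0∞,
      (∀ (s : S) (r : ℝ≥0∞) (s' : S) (r' : ℝ≥0∞) (n n' : ℕ), (s, r) ∈ G → (s', r') ∈ G →
        s + n • z ≤ s' + n' • z → r + n * α ≤ r' + n' * α) ∧
      (∀ γ : ℝ≥0∞, (∀ (s : S) (r : ℝ≥0∞) (s' : S) (r' : ℝ≥0∞) (n : ℕ),
          (s, r) ∈ G → (s', r') ∈ G →
          1 ≤ n → s + n • z ≤ s' → r' ≠ ⊤ → (n : ℝ≥0∞) * γ + r ≤ r') → γ ≤ α) := by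
  classical
  set T : Set ℝ≥0∞ := {c | ∃ (s : S) (r : ℝ≥0∞) (s' : S) (r' : ℝ≥0∞) (n : ℕ),
    (s, r) ∈ G ∧ (s', r') ∈ G ∧ 1 ≤ n ∧ s + n • z ≤ s' ∧ r' ≠ ⊤ ∧
    c = (r' - r) / (n : ℝ≥0∞)} with hTdef
  by_cases hT : T.Nonempty
  · -- trades exist; take α = sInf T
    refine ⟨sInf T, ?_, ?_⟩
    · -- master property
      have hαfin : sInf T ≠ ⊤ := by
        obtain ⟨c, hc⟩ := hT
        have hct : c ≠ ⊤ := by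
          obtain ⟨s, r, s', r', n, _, _, hn, _, hr', hceq⟩ := hc
          rw [hceq]
          exact (ENNReal.div_lt_top (ne_top_of_le_ne_top hr' tsub_le_self)
            (Nat.cast_ne_zero.mpr (by omega))).ne
        exact ne_top_of_le_ne_top hct (sInf_le hc)
      intro s r s' r' n n' hs hs' hle
      by_cases hr' : r' = ⊤
      · rw [hr']; simp [top_add]
      -- per-trade bound
      have pertrade : ∀ c0 ∈ T, r + n * sInf T ≤ r' + n' * c0 := by
        rintro c0 ⟨s0, r0, s0', r0', n0, hs0, hs0', hn0, hle0, hr0', hc0⟩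
        -- derived relation
        have hrel : (n0 • s + n' • s0) + (n0 * n) • z ≤ n0 • s' + n' • s0' := by
          have h1 : n0 • s + (n0 * n) • z ≤ n0 • s' + (n0 * n') • z := by
            have := RT.nsmul_mono hadd n0 hle
            rwa [smul_add, smul_add, smul_smul, smul_smul] at this
          have h2 : n' • s0 + (n' * n0) • z ≤ n' • s0' := by
            have := RT.nsmul_mono hadd n' hle0
            rwa [smul_add, smul_smul] at this
          calc (n0 • s + n' • s0) + (n0 * n) • z
              = (n0 • s + (n0 * n) • z) + n' • s0 := by
                rw [add_assoc, add_comm (n' • s0), ← add_assoc]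
            _ ≤ (n0 • s' + (n0 * n') • z) + n' • s0 := hadd _ _ _ h1
            _ = n0 • s' + (n' • s0 + (n' * n0) • z) := by
                rw [add_assoc, add_comm ((n0 * n') • z), mul_comm n0 n']
            _ ≤ n0 • s' + n' • s0' := RT.add_le_add hadd le_rfl h2
        -- graph members for combined elements
        have hB : ((n0 • s + n' • s0 : S), (n0 : ℝ≥0∞) * r + (n' : ℝ≥0∞) * r0) ∈ G :=
          hG.2.1 _ (RT.good_smul hG hs n0) _ (RT.good_smul hG hs0 n')
        have hB' : ((n0 • s' + n' • s0' : S), (n0 : ℝ≥0∞) * r' + (n' : ℝ≥0∞) * r0') ∈ G :=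
          hG.2.1 _ (RT.good_smul hG hs' n0) _ (RT.good_smul hG hs0' n')
        set B : ℝ≥0∞ := (n0 : ℝ≥0∞) * r + (n' : ℝ≥0∞) * r0 with hBdef
        set B' : ℝ≥0∞ := (n0 : ℝ≥0∞) * r' + (n' : ℝ≥0∞) * r0' with hB'def
        have hBB' : B ≤ B' := by
          refine hG.2.2.2 _ hB _ hB' ?_
          calc (n0 • s + n' • s0 : S) ≤ (n0 * n) • z + (n0 • s + n' • s0) :=
                RT.le_add_left hzero hadd _ _
            _ = (n0 • s + n' • s0) + (n0 * n) • z := add_comm _ _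
            _ ≤ n0 • s' + n' • s0' := hrel
        have hB'fin : B' ≠ ⊤ := by
          rw [hB'def]
          exact ENNReal.add_ne_top.mpr ⟨ENNReal.mul_ne_top (by simp) hr',
            ENNReal.mul_ne_top (by simp) hr0'⟩
        -- key inequality: (n0*n) * sInf T + B ≤ B'
        have hkey : ((n0 * n : ℕ) : ℝ≥0∞) * sInf T + B ≤ B' := by
          rcases Nat.eq_zero_or_pos n with hn_ | hn_
          · subst hn_
            simpa using hBB'
          · have hmem : ((B' - B) / ((n0 * n : ℕ) : ℝ≥0∞)) ∈ T := by
              exact ⟨_, _, _, _, n0 * n, hB, hB',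
                Nat.one_le_iff_ne_zero.mpr (Nat.mul_ne_zero (by omega) (by omega)),
                hrel, hB'fin, rfl⟩
            have h1 : sInf T ≤ (B' - B) / ((n0 * n : ℕ) : ℝ≥0∞) := sInf_le hmem
            have hu0 : ((n0 * n : ℕ) : ℝ≥0∞) ≠ 0 :=
              Nat.cast_ne_zero.mpr (Nat.mul_ne_zero (by omega) (by omega))
            have hut : ((n0 * n : ℕ) : ℝ≥0∞) ≠ ⊤ := ENNReal.natCast_ne_top _
            have h2 : sInf T * ((n0 * n : ℕ) : ℝ≥0∞) ≤ B' - B :=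
              (ENNReal.le_div_iff_mul_le (Or.inl hu0) (Or.inl hut)).mp h1
            calc ((n0 * n : ℕ) : ℝ≥0∞) * sInf T + B = sInf T * ((n0 * n : ℕ) : ℝ≥0∞) + B := by ring
              _ ≤ (B' - B) + B := add_le_add_left h2 B
              _ = B' := tsub_add_cancel_of_le hBB'
        -- now rearrange using r0' = r0 + n0 * c0
        have hr0r0' : r0 ≤ r0' := by
          refine hG.2.2.2 _ hs0 _ hs0' ?_
          calc s0 ≤ (n0 : ℕ) • z + s0 := RT.le_add_left hzero hadd _ _
            _ = s0 + (n0 : ℕ) • z := add_comm _ _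
            _ ≤ s0' := hle0
        have hr0fin : r0 ≠ ⊤ := fun h => hr0' (top_le_iff.mp (h ▸ hr0r0'))
        have hn0c : (n0 : ℝ≥0∞) * c0 = r0' - r0 := by
          rw [hc0, mul_comm]
          exact ENNReal.div_mul_cancel (by exact_mod_cast (by omega : n0 ≠ 0)) (by simp)
        have hr0'eq : r0' = r0 + (n0 : ℝ≥0∞) * c0 := by
          rw [hn0c, add_tsub_cancel_of_le hr0r0']
        -- substitute and cancel
        have hkey2 : ((n0 * n : ℕ) : ℝ≥0∞) * sInf T + ((n0 : ℝ≥0∞) * r + (n' : ℝ≥0∞) * r0)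
            ≤ ((n0 : ℝ≥0∞) * r' + (n' : ℝ≥0∞) * ((n0 : ℝ≥0∞) * c0)) + (n' : ℝ≥0∞) * r0 := by
          have : B' = ((n0 : ℝ≥0∞) * r' + (n' : ℝ≥0∞) * ((n0 : ℝ≥0∞) * c0)) + (n' : ℝ≥0∞) * r0 := by
            rw [hB'def, hr0'eq]; ring
          rw [← this]; exact hkey
        have hr0fin' : (n' : ℝ≥0∞) * r0 ≠ ⊤ := ENNReal.mul_ne_top (by simp) hr0fin
        have hkey3 : ((n0 * n : ℕ) : ℝ≥0∞) * sInf T + (n0 : ℝ≥0∞) * r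
            ≤ (n0 : ℝ≥0∞) * r' + (n' : ℝ≥0∞) * ((n0 : ℝ≥0∞) * c0) := by
          have := (ENNReal.add_le_add_iff_right hr0fin').mp (by
            calc ((n0 * n : ℕ) : ℝ≥0∞) * sInf T + (n0 : ℝ≥0∞) * r + (n' : ℝ≥0∞) * r0
                = ((n0 * n : ℕ) : ℝ≥0∞) * sInf T + ((n0 : ℝ≥0∞) * r + (n' : ℝ≥0∞) * r0) := by ring
              _ ≤ ((n0 : ℝ≥0∞) * r' + (n' : ℝ≥0∞) * ((n0 : ℝ≥0∞) * c0)) + (n' : ℝ≥0∞) * r0 := hkey2)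
          exact this
        -- divide by n0
        have hn0ne : (n0 : ℝ≥0∞) ≠ 0 := by exact_mod_cast (by omega : n0 ≠ 0)
        have hfactor : (n0 : ℝ≥0∞) * (r + (n : ℝ≥0∞) * sInf T) ≤ (n0 : ℝ≥0∞) * (r' + (n' : ℝ≥0∞) * c0) := by
          calc (n0 : ℝ≥0∞) * (r + (n : ℝ≥0∞) * sInf T)
              = ((n0 * n : ℕ) : ℝ≥0∞) * sInf T + (n0 : ℝ≥0∞) * r := by push_cast; ring
            _ ≤ (n0 : ℝ≥0∞) * r' + (n' : ℝ≥0∞) * ((n0 : ℝ≥0∞) * c0) := hkey3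
            _ = (n0 : ℝ≥0∞) * (r' + (n' : ℝ≥0∞) * c0) := by ring
        exact (ENNReal.mul_le_mul_iff_right hn0ne (by simp)).mp hfactor
      -- conclude from per-trade bounds
      rcases Nat.eq_zero_or_pos n' with hn'_ | hn'_
      · subst hn'_
        obtain ⟨c0, hc0⟩ := hT
        simpa using pertrade c0 hc0
      · refine ENNReal.le_of_forall_pos_le_add ?_
        intro ε hε hfin
        have hδ : ((ε : ℝ≥0∞) / (n' : ℝ≥0∞)) ≠ 0 := by
          rw [Ne, ENNReal.div_eq_zero_iff]
          push_neg
          exact ⟨by exact_mod_cast hε.ne', ENNReal.natCast_ne_top _⟩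
        have hlt : sInf T < sInf T + (ε : ℝ≥0∞) / (n' : ℝ≥0∞) :=
          ENNReal.lt_add_right hαfin hδ
        obtain ⟨c0, hc0T, hc0lt⟩ := sInf_lt_iff.mp hlt
        have h1 := pertrade c0 hc0T
        have hcancel : (n' : ℝ≥0∞) * ((ε : ℝ≥0∞) / (n' : ℝ≥0∞)) = (ε : ℝ≥0∞) := by
          rw [mul_comm]
          exact ENNReal.div_mul_cancel (Nat.cast_ne_zero.mpr (by omega)) (ENNReal.natCast_ne_top _)
        have h2 : (n' : ℝ≥0∞) * c0 ≤ (n' : ℝ≥0∞) * sInf T + ε := by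
          calc (n' : ℝ≥0∞) * c0 ≤ (n' : ℝ≥0∞) * (sInf T + (ε : ℝ≥0∞) / (n' : ℝ≥0∞)) :=
                mul_le_mul_right hc0lt.le _
            _ = (n' : ℝ≥0∞) * sInf T + (n' : ℝ≥0∞) * ((ε : ℝ≥0∞) / (n' : ℝ≥0∞)) := mul_add _ _ _
            _ = (n' : ℝ≥0∞) * sInf T + ε := by rw [hcancel]
        calc r + (n : ℝ≥0∞) * sInf T ≤ r' + (n' : ℝ≥0∞) * c0 := h1
          _ ≤ r' + ((n' : ℝ≥0∞) * sInf T + ε) := by gcongr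
          _ = r' + (n' : ℝ≥0∞) * sInf T + ε := by rw [add_assoc]
    · -- lower bound property
      intro γ hγ
      refine le_sInf ?_
      rintro c ⟨s, r, s', r', n, hs, hs', hn, hle, hr', hceq⟩
      have h1 : (n : ℝ≥0∞) * γ + r ≤ r' := hγ s r s' r' n hs hs' hn hle hr'
      have hrr' : r ≤ r' := by
        refine hG.2.2.2 _ hs _ hs' ?_
        calc s ≤ (n : ℕ) • z + s := RT.le_add_left hzero hadd _ _
          _ = s + (n : ℕ) • z := add_comm _ _
          _ ≤ s' := hle
      have hrfin : r ≠ ⊤ := fun h => hr' (top_le_iff.mp (h ▸ hrr'))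
      have h2 : (n : ℝ≥0∞) * γ ≤ r' - r := ENNReal.le_sub_of_add_le_right hrfin h1
      rw [hceq]
      exact (ENNReal.le_div_iff_mul_le (Or.inl (Nat.cast_ne_zero.mpr (by omega)))
        (Or.inl (ENNReal.natCast_ne_top _))).mpr (by rw [mul_comm]; exact h2)
  · -- no trades: α = ⊤
    refine ⟨⊤, ?_, fun γ _ => le_top⟩
    intro s r s' r' n n' hs hs' hle
    rcases Nat.eq_zero_or_pos n' with hn'_ | hn'_
    · subst hn'_
      rcases Nat.eq_zero_or_pos n with hn_ | hn_
      · subst hn_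
        simp only [zero_smul, add_zero] at hle
        simpa using hG.2.2.2 _ hs _ hs' hle
      · by_cases hr' : r' = ⊤
        · rw [hr']; simp [top_add]
        · exfalso
          refine hT ⟨(r' - r) / (n : ℝ≥0∞), s, r, s', r', n, hs, hs', hn_, ?_, hr', rfl⟩
          simpa using hle
    · have : (n' : ℝ≥0∞) * ⊤ = ⊤ := by
        rw [ENNReal.mul_top (by exact_mod_cast (by omega : n' ≠ 0))]
      rw [this]
      simp [add_top]

lemma RT.extend (hzero : ∀ x : S, 0 ≤ x)
    (hadd : ∀ x y z : S, x ≤ y → x + z ≤ y + z)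
    {G : Set (S × ℝ≥0∞)} (hG : RT.Good G) (z : S) (α : ℝ≥0∞)
    (hα : ∀ (s : S) (r : ℝ≥0∞) (s' : S) (r' : ℝ≥0∞) (n n' : ℕ), (s, r) ∈ G → (s', r') ∈ G →
      s + n • z ≤ s' + n' • z → r + n * α ≤ r' + n' * α) :
    ∃ G' : Set (S × ℝ≥0∞), RT.Good G' ∧ G ⊆ G' ∧ (z, α) ∈ G' := by
  refine ⟨{p | ∃ (s : S) (r : ℝ≥0∞) (n : ℕ), (s, r) ∈ G ∧ p = (s + n • z, r + n * α)},
    ⟨⟨0, 0, 0, hG.1, by simp⟩, ?_, ?_, ?_⟩, ?_, ⟨0, 0, 1, hG.1, by simp⟩⟩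
  · rintro p ⟨s1, r1, n1, h1, rfl⟩ q ⟨s2, r2, n2, h2, rfl⟩
    refine ⟨s1 + s2, r1 + r2, n1 + n2, hG.2.1 _ h1 _ h2, ?_⟩
    have e1 : (s1 + n1 • z) + (s2 + n2 • z) = (s1 + s2) + (n1 + n2) • z := by
      rw [add_nsmul]; abel
    have e2 : (r1 + (n1 : ℝ≥0∞) * α) + (r2 + (n2 : ℝ≥0∞) * α)
        = (r1 + r2) + ((n1 + n2 : ℕ) : ℝ≥0∞) * α := by push_cast; ring
    simp only [Prod.mk.injEq]
    exact ⟨e1, e2⟩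
  · rintro p ⟨s1, r1, n1, h1, rfl⟩ q ⟨s2, r2, n2, h2, rfl⟩ hpq
    simp only at hpq ⊢
    exact le_antisymm (hα _ _ _ _ _ _ h1 h2 hpq.le) (hα _ _ _ _ _ _ h2 h1 hpq.ge)
  · rintro p ⟨s1, r1, n1, h1, rfl⟩ q ⟨s2, r2, n2, h2, rfl⟩ hpq
    simp only at hpq ⊢
    exact hα _ _ _ _ _ _ h1 h2 hpq
  · intro p hp
    exact ⟨p.1, p.2, 0, by simpa using hp, by simp⟩

lemma RT.total (hzero : ∀ x : S, 0 ≤ x)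
    (hadd : ∀ x y z : S, x ≤ y → x + z ≤ y + z)
    {G₀ : Set (S × ℝ≥0∞)} (h₀ : RT.Good G₀) :
    ∃ ν : S → ℝ≥0∞, (ν 0 = 0 ∧ (∀ a b : S, ν (a + b) = ν a + ν b) ∧
      ∀ a b : S, a ≤ b → ν a ≤ ν b) ∧ ∀ s r, (s, r) ∈ G₀ → ν s = r := by
  classical
  set 𝒜 : Set (Set (S × ℝ≥0∞)) := {G | RT.Good G ∧ G₀ ⊆ G} with h𝒜
  have hchains : ∀ c ⊆ 𝒜, IsChain (fun x1 x2 => x1 ⊆ x2) c → c.Nonempty →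
      ∃ ub ∈ 𝒜, ∀ s ∈ c, s ⊆ ub := by
    intro c hc hchain hne
    obtain ⟨G1, hG1⟩ := hne
    have hpair : ∀ {p q : S × ℝ≥0∞}, (∃ GA ∈ c, p ∈ GA) → (∃ GB ∈ c, q ∈ GB) →
        ∃ GC ∈ c, p ∈ GC ∧ q ∈ GC := by
      rintro p q ⟨GA, hGA, hpA⟩ ⟨GB, hGB, hqB⟩
      rcases hchain.total hGA hGB with h | h
      · exact ⟨GB, hGB, h hpA, hqB⟩
      · exact ⟨GA, hGA, hpA, h hqB⟩
    refine ⟨⋃₀ c, ⟨⟨⟨G1, hG1, (hc hG1).1.1⟩, ?_, ?_, ?_⟩, ?_⟩, fun s hs => Set.subset_sUnion_of_mem hs⟩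
    · rintro p hp q hq
      obtain ⟨GC, hGC, hpC, hqC⟩ := hpair (Set.mem_sUnion.mp hp) (Set.mem_sUnion.mp hq)
      exact ⟨GC, hGC, (hc hGC).1.2.1 _ hpC _ hqC⟩
    · rintro p hp q hq h
      obtain ⟨GC, hGC, hpC, hqC⟩ := hpair (Set.mem_sUnion.mp hp) (Set.mem_sUnion.mp hq)
      exact (hc hGC).1.2.2.1 _ hpC _ hqC h
    · rintro p hp q hq h
      obtain ⟨GC, hGC, hpC, hqC⟩ := hpair (Set.mem_sUnion.mp hp) (Set.mem_sUnion.mp hq)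
      exact (hc hGC).1.2.2.2 _ hpC _ hqC h
    · exact (hc hG1).2.trans (Set.subset_sUnion_of_mem hG1)
  obtain ⟨M, hsub, hmax⟩ := zorn_subset_nonempty 𝒜 hchains G₀ ⟨h₀, subset_rfl⟩
  have hMgood : RT.Good M := hmax.prop.1
  have htotal : ∀ z : S, ∃ r, (z, r) ∈ M := by
    intro z
    by_contra hz
    push_neg at hz
    obtain ⟨α, hα, _⟩ := RT.onestep hzero hadd hMgood z
    obtain ⟨G', hG', hMG', hzG'⟩ := RT.extend hzero hadd hMgood z α hα
    have hG'in : G' ∈ 𝒜 := ⟨hG', hmax.prop.2.trans hMG'⟩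
    exact hz α (hmax.2 hG'in hMG' hzG')
  choose ν hν using htotal
  have hfun : ∀ {s : S} {r : ℝ≥0∞}, (s, r) ∈ M → ν s = r :=
    fun {s r} h => hMgood.2.2.1 _ (hν s) _ h rfl
  refine ⟨ν, ⟨hfun hMgood.1, ?_, ?_⟩, fun s r h => hfun (hmax.prop.2 h)⟩
  · intro a b
    exact hfun (hMgood.2.1 _ (hν a) _ (hν b))
  · intro a b hab
    exact hMgood.2.2.2 _ (hν a) _ (hν b) hab

end RT

open scoped ENNReal

/-- A state on a preordered abelian monoid. -/
def IsState {S : Type*} [AddCommMonoid S] [Preorder S] (ν : S → ℝ≥0∞) : Prop :=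
  ν 0 = 0 ∧ (∀ a b : S, ν (a + b) = ν a + ν b) ∧ ∀ a b : S, a ≤ b → ν a ≤ ν b

private lemma RT.state_nsmul {S : Type*} [AddCommMonoid S] [Preorder S] {ν : S → ℝ≥0∞}
    (hν : IsState ν) (n : ℕ) (a : S) : ν (n • a) = (n : ℝ≥0∞) * ν a := by
  induction n with
  | zero => simpa using hν.1
  | succ k ih =>
    rw [succ_nsmul, hν.2.1, ih]
    push_cast; ring

/-- The Rørdam–Tarski Theorem: `x <ₛ y` (i.e. `(n+1) • x ≤ n • y` for some `n ≥ 1`)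
if and only if `x ∈ ⟨y⟩` and `ν x < ν y` for every state `ν` with `ν y = 1`. -/
theorem stmt9 {S : Type*} [AddCommMonoid S] [Preorder S]
    (hzero : ∀ x : S, 0 ≤ x)
    (hadd : ∀ x y z : S, x ≤ y → x + z ≤ y + z)
    (x y : S) :
    (∃ n : ℕ, 1 ≤ n ∧ (n + 1) • x ≤ n • y) ↔
      ((∃ n : ℕ, x ≤ n • y) ∧
        ∀ ν : S → ℝ≥0∞, IsState ν → ν y = 1 → ν x < ν y) := by
  constructor
  · rintro ⟨n, hn1, hle⟩
    have hxny : x ≤ n • y := by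
      calc x = 0 + x := (zero_add x).symm
        _ ≤ n • x + x := hadd _ _ _ (hzero _)
        _ = (n + 1) • x := (succ_nsmul x n).symm
        _ ≤ n • y := hle
    refine ⟨⟨n, hxny⟩, ?_⟩
    intro ν hν hνy
    by_contra hcon
    push_neg at hcon
    rw [hνy] at hcon
    have h1 : ν ((n + 1) • x) ≤ ν (n • y) := hν.2.2 _ _ hle
    rw [RT.state_nsmul hν, RT.state_nsmul hν, hνy, mul_one] at h1
    have h3 : ((n + 1 : ℕ) : ℝ≥0∞) ≤ (n : ℝ≥0∞) := by
      calc ((n + 1 : ℕ) : ℝ≥0∞) = ((n + 1 : ℕ) : ℝ≥0∞) * 1 := (mul_one _).symm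
        _ ≤ ((n + 1 : ℕ) : ℝ≥0∞) * ν x := mul_le_mul_right hcon _
        _ ≤ (n : ℝ≥0∞) := h1
    exact absurd (Nat.cast_le.mp h3) (by omega)
  · rintro ⟨⟨m, hm⟩, hst⟩
    by_contra hns
    rcases Nat.eq_zero_or_pos m with hm0 | hm0
    · subst hm0
      have hx0 : x ≤ 0 := by simpa using hm
      refine hns ⟨1, le_rfl, ?_⟩
      have h2 : (1 + 1) • x = x + x := by rw [add_nsmul, one_smul]
      rw [h2, one_smul]
      calc x + x ≤ 0 + x := hadd _ _ _ hx0
        _ = x := zero_add x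
        _ ≤ 0 := hx0
        _ ≤ y := hzero y
    · -- main case: build a state with ν y = 1, ν x ≥ 1
      have hm1 : 1 ≤ m := hm0
      set G₁ : Set (S × ℝ≥0∞) := {p | ∃ b : ℕ, p = (b • y, (b : ℝ≥0∞))} with hG₁def
      have hG₁ : RT.Good G₁ := by
        refine ⟨⟨0, by simp⟩, ?_, ?_, ?_⟩
        · rintro p ⟨b1, rfl⟩ q ⟨b2, rfl⟩
          refine ⟨b1 + b2, ?_⟩
          simp only [Prod.mk.injEq]
          constructor
          · rw [add_nsmul]
          · push_cast; ring
        · rintro p ⟨b1, rfl⟩ q ⟨b2, rfl⟩ h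
          simp only at h ⊢
          rcases lt_trichotomy b1 b2 with hb | hb | hb
          · exact absurd (RT.fact1 hzero hadd hm hm1 hns (le_of_eq h.symm) hb) (fun f => f)
          · exact congrArg _ hb
          · exact absurd (RT.fact1 hzero hadd hm hm1 hns (le_of_eq h) hb) (fun f => f)
        · rintro p ⟨b1, rfl⟩ q ⟨b2, rfl⟩ h
          simp only at h ⊢
          rcases le_or_gt b1 b2 with hb | hb
          · exact_mod_cast hb
          · exact absurd (RT.fact1 hzero hadd hm hm1 hns h hb) (fun f => f)
      obtain ⟨α, hα, hlb⟩ := RT.onestep hzero hadd hG₁ x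
      have hα1 : (1 : ℝ≥0∞) ≤ α := by
        refine hlb 1 ?_
        rintro s r s' r' n ⟨b, hb⟩ ⟨b', hb'⟩ hn hle _
        rw [Prod.mk.injEq] at hb hb'
        obtain ⟨rfl, rfl⟩ := hb
        obtain ⟨rfl, rfl⟩ := hb'
        have hb'lt : ¬ b' < b + n := fun hlt => RT.fact2 hzero hadd hns hle hn hlt
        push_neg at hb'lt
        calc (n : ℝ≥0∞) * 1 + (b : ℝ≥0∞) = ((n + b : ℕ) : ℝ≥0∞) := by push_cast; ring
          _ ≤ ((b' : ℕ) : ℝ≥0∞) := by exact_mod_cast (by omega : n + b ≤ b')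
      obtain ⟨G₂, hG₂, hsub₁₂, hxα⟩ := RT.extend hzero hadd hG₁ x α hα
      obtain ⟨ν, hνstate, hagree⟩ := RT.total hzero hadd hG₂
      have hνy : ν y = 1 := by
        have h1 : ((1 : ℕ) • y, ((1 : ℕ) : ℝ≥0∞)) ∈ G₁ := ⟨1, rfl⟩
        have := hagree _ _ (hsub₁₂ h1)
        simpa using this
      have hνx : ν x = α := hagree _ _ hxα
      have hlt := hst ν hνstate hνy
      rw [hνx, hνy] at hlt
      exact absurd hlt (not_lt.mpr hα1)
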